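/- Define f_∞(N_S, N_D, N_F) = (N_D + (1−α)·N_F) / (N_S + N_D + (K/(K−1))·(1−α)·N_F) for K ≥ 2, positive reals N_S, N_D, N_F and 1/K < α < 1. Then the partial derivative of f_∞ with respect to N_F (holding N_S, N_D fixed) is positive if and only if N_S > N_D/(K−1). -/
import Mathlib


theorem jr_abs_effect (K : ℕ) (hK : 2 ≤ K) (α N_S N_D N_F : ℝ)
    (hNS : 0 < N_S) (hND : 0 < N_D) (hNF : 0 < N_F)
    (hα1 : 1 / K < α) (hα2 : α < 1) :
    (0 < deriv (fun x : ℝ =>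
        (N_D + (1 - α) * x) /
          (N_S + N_D + ((K : ℝ) / ((K : ℝ) - 1)) * (1 - α) * x)) N_F) ↔
      N_S > N_D / ((K : ℝ) - 1) := by
  have hK1 : (1 : ℝ) < (K : ℝ) := by exact_mod_cast hK.trans_lt' one_lt_two
  have hKm : (0 : ℝ) < (K : ℝ) - 1 := by linarith
  have hb : (0 : ℝ) < 1 - α := by linarith
  set c : ℝ := N_S + N_D with hc
  set d : ℝ := (K : ℝ) / ((K : ℝ) - 1) * (1 - α) with hd
  have hdpos : 0 < d := by
    apply mul_pos (div_pos (by linarith) hKm) hb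
  have hden : 0 < c + d * N_F := by positivity
  have h1 : HasDerivAt (fun x : ℝ => N_D + (1 - α) * x) (1 - α) N_F := by
    simpa using ((hasDerivAt_id N_F).const_mul (1 - α)).const_add N_D
  have h2 : HasDerivAt (fun x : ℝ => c + d * x) d N_F := by
    simpa using ((hasDerivAt_id N_F).const_mul d).const_add c
  have h3 : HasDerivAt (fun x : ℝ => (N_D + (1 - α) * x) / (c + d * x))
      (((1 - α) * (c + d * N_F) - (N_D + (1 - α) * N_F) * d) / (c + d * N_F) ^ 2)
      N_F := h1.div h2 hden.ne'
  rw [h3.deriv]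
  have hsq : 0 < (c + d * N_F) ^ 2 := by positivity
  rw [div_pos_iff_of_pos_right hsq]
  have hkey : (1 - α) * (c + d * N_F) - (N_D + (1 - α) * N_F) * d
      = (1 - α) * c - N_D * d := by ring
  rw [hkey, hd, hc]
  have hrK : (K : ℝ) / ((K : ℝ) - 1) * ((K : ℝ) - 1) = (K : ℝ) := by field_simp
  rw [gt_iff_lt, div_lt_iff₀ hKm]
  constructor
  · intro h
    have h' : N_D * ((K : ℝ) / ((K : ℝ) - 1)) < N_S + N_D := by nlinarith
    have h'' := mul_lt_mul_of_pos_right h' hKm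
    nlinarith
  · intro h
    have h' : N_D * ((K : ℝ) / ((K : ℝ) - 1)) * ((K : ℝ) - 1) < (N_S + N_D) * ((K : ℝ) - 1) := by
      nlinarith
    have h'' : N_D * ((K : ℝ) / ((K : ℝ) - 1)) < N_S + N_D :=
      lt_of_mul_lt_mul_right (by nlinarith) hKm.le
    nlinarith
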